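/- Fix a nonempty finite set A ⊆ 𝔽₂ⁿ and a linear subspace V ⊆ 𝔽₂ⁿ. If τ⁺(U_V) + τ⁻(U_V) ≤ r for some real r ≥ 0, then there exists t ∈ 𝔽₂ⁿ such that |A ∩ (V+t)| ≥ 2^{−r}·max(|A|, |V|). -/

import Mathlib

open scoped BigOperators Pointwise Classical

set_option maxHeartbeats 2000000

noncomputable section

/-- `𝔽₂ⁿ`, the `n`-dimensional vector space over the field with two elements. -/
abbrev F2 (n : ℕ) : Type := Fin n → ZMod 2

/-- `f` is a probability distribution on the finite type `α`. -/
def IsDist {α : Type*} [Fintype α] (f : α → ℝ) : Prop :=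
  (∀ x, 0 ≤ f x) ∧ ∑ x, f x = 1

/-- Shannon entropy (base 2) of a distribution on a finite type. -/
def ent {α : Type*} [Fintype α] (f : α → ℝ) : ℝ :=
  ∑ x, -(f x * Real.logb 2 (f x))

/-- Distribution of `X + Y` for independent `X ∼ f`, `Y ∼ g`. -/
def addDist {α : Type*} [Fintype α] [AddGroup α] (f g : α → ℝ) : α → ℝ :=
  fun s => ∑ x, f x * g (s - x)

/-- Distribution of `X - Y` for independent `X ∼ f`, `Y ∼ g`. -/
def subDist {α : Type*} [Fintype α] [AddGroup α] (f g : α → ℝ) : α → ℝ :=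
  fun s => ∑ x, f x * g (x - s)

/-- Entropic Ruzsa distance `d[X;Y] = H(X' + Y') - (H(X) + H(Y))/2` (in `𝔽₂ⁿ`
addition coincides with subtraction). -/
def rdist {α : Type*} [Fintype α] [AddGroup α] (f g : α → ℝ) : ℝ :=
  ent (addDist f g) - (ent f + ent g) / 2

/-- Entropic Ruzsa distance `d[X;Y] = H(X' - Y') - (H(X) + H(Y))/2` in a general group. -/
def rdistSub {α : Type*} [Fintype α] [AddGroup α] (f g : α → ℝ) : ℝ :=
  ent (subDist f g) - (ent f + ent g) / 2

/-- Pushforward of a distribution along a map. -/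
def pmap {α β : Type*} [Fintype α] (h : α → β) (π : α → ℝ) : β → ℝ :=
  fun b => ∑ a, if h a = b then π a else 0

/-- First marginal of a joint distribution. -/
def margFst {α γ : Type*} [Fintype γ] (π : α × γ → ℝ) : α → ℝ :=
  fun a => ∑ z, π (a, z)

/-- Second marginal of a joint distribution. -/
def margSnd {α γ : Type*} [Fintype α] (π : α × γ → ℝ) : γ → ℝ :=
  fun z => ∑ a, π (a, z)

/-- Conditional distribution of the first coordinate given that the second equals `z`. -/
def condDist {α γ : Type*} [Fintype α] (π : α × γ → ℝ) (z : γ) : α → ℝ :=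
  fun a => π (a, z) / margSnd π z

/-- Conditional entropy `H(X | Z) = E_{z ∼ Z} H(X |_{Z = z})`. -/
def condEnt {α γ : Type*} [Fintype α] [Fintype γ] (π : α × γ → ℝ) : ℝ :=
  ∑ z, margSnd π z * ent (condDist π z)

/-- Mutual information `I(X : Y) = H(X) + H(Y) - H(X, Y)`. -/
def mutInfo {α β : Type*} [Fintype α] [Fintype β] (π : α × β → ℝ) : ℝ :=
  ent (margFst π) + ent (margSnd π) - ent π

/-- Conditional mutual information `I(X : Y | Z) = E_{z ∼ Z} I(X|_{Z=z} : Y|_{Z=z})`. -/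
def condMutInfo {α β γ : Type*} [Fintype α] [Fintype β] [Fintype γ]
    (π : (α × β) × γ → ℝ) : ℝ :=
  ∑ z, margSnd π z * mutInfo (condDist π z)

/-- Conditioned Ruzsa distance `d[(X;Y) | Z] = E_{z ∼ Z} d[X|_{Z=z} ; Y|_{Z=z}]`, where
inside the expectation the two conditioned variables are treated as independent. -/
def condRdist {α γ : Type*} [Fintype α] [Fintype γ] [AddGroup α]
    (π : (α × α) × γ → ℝ) : ℝ :=
  ∑ z, margSnd π z * rdist (pmap Prod.fst (condDist π z)) (pmap Prod.snd (condDist π z))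

/-- Doubly conditioned Ruzsa distance `d[X | Z ; Y | W] = E_{z,w} d[X|_{Z=z} ; Y|_{W=w}]`
for `(X,Z)` independent of `(Y,W)`. -/
def condRdist2 {α γ δ : Type*} [Fintype α] [Fintype γ] [Fintype δ] [AddGroup α]
    (π : α × γ → ℝ) (ρ : α × δ → ℝ) : ℝ :=
  ∑ z, ∑ w, margSnd π z * margSnd ρ w * rdist (condDist π z) (condDist ρ w)

/-- The uniform distribution on a finite set `A`. -/
def unifFin {α : Type*} [Fintype α] (A : Finset α) : α → ℝ :=
  fun x => if x ∈ A then (A.card : ℝ)⁻¹ else 0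

/-- The uniform distribution on a set `S`. -/
def unifSet {α : Type*} [Fintype α] (S : Set α) : α → ℝ :=
  fun x => if x ∈ S then (Nat.card S : ℝ)⁻¹ else 0

/-- Kullback–Leibler divergence (base-2 logarithm), with value `⊤` if the support of `f`
is not contained in the support of `g`. -/
def KL {α : Type*} [Fintype α] (f g : α → ℝ) : EReal :=
  if ∀ x, g x = 0 → f x = 0 then
    ((∑ x, f x * Real.logb 2 (f x / g x) : ℝ) : EReal)
  else ⊤

/-- `τ⁻(X) := inf_T D_KL(X ‖ U_A + T)`, the infimum over all `𝔽₂ⁿ`-valued random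
variables `T` independent of `U_A`. -/
def tauMinus {n : ℕ} (A : Finset (F2 n)) (f : F2 n → ℝ) : EReal :=
  ⨅ t : {t : F2 n → ℝ // IsDist t}, KL f (addDist (unifFin A) t.1)

/-- `τ⁺(X) := τ⁻(X) + H(X) - H(U_A)`. -/
def tauPlus {n : ℕ} (A : Finset (F2 n)) (f : F2 n → ℝ) : EReal :=
  tauMinus A f + ((ent f - ent (unifFin A) : ℝ) : EReal)


section Aux

lemma F2.add_self {n : ℕ} (v : F2 n) : v + v = 0 := by
  funext i
  have : ∀ x : ZMod 2, x + x = 0 := by decide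
  exact this (v i)

lemma F2.sub_eq_add {n : ℕ} (u v : F2 n) : u - v = u + v := by
  funext i
  have : ∀ x y : ZMod 2, x - y = x + y := by decide
  exact this (u i) (v i)

/-- Gibbs-type bound: the KL divergence of the uniform distribution on `Vf` from `g`
is at least `logb 2 s⁻¹` whenever `∑_{Vf} g ≤ s`. -/
lemma gibbs_bound {α : Type*} (Vf : Finset α) (hVf : Vf.Nonempty)
    (g : α → ℝ) (hg : ∀ x ∈ Vf, 0 < g x) (s : ℝ) (hs : 0 < s)
    (hsum : ∑ x ∈ Vf, g x ≤ s) :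
    Real.logb 2 s⁻¹ ≤ ∑ x ∈ Vf, (Vf.card : ℝ)⁻¹ * Real.logb 2 ((Vf.card : ℝ)⁻¹ / g x) := by
  have hN : (0 : ℝ) < (Vf.card : ℝ) := by
    exact_mod_cast Finset.card_pos.mpr hVf
  set N : ℝ := (Vf.card : ℝ) with hNdef
  have hlog2 : (0 : ℝ) < Real.log 2 := Real.log_pos one_lt_two
  -- key inequality in natural logs
  have key : ∑ x ∈ Vf, N⁻¹ * Real.log (N * g x / s) ≤ 0 := by
    have h1 : ∀ x ∈ Vf, N⁻¹ * Real.log (N * g x / s) ≤ N⁻¹ * (N * g x / s - 1) := by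
      intro x hx
      have := hg x hx
      exact mul_le_mul_of_nonneg_left (Real.log_le_sub_one_of_pos (by positivity))
        (by positivity)
    calc ∑ x ∈ Vf, N⁻¹ * Real.log (N * g x / s)
        ≤ ∑ x ∈ Vf, N⁻¹ * (N * g x / s - 1) := Finset.sum_le_sum h1
      _ = (∑ x ∈ Vf, g x) / s - 1 := by
          rw [Finset.sum_congr rfl (g := fun x => g x / s - N⁻¹)
            (fun x _ => by field_simp)]
          rw [Finset.sum_sub_distrib, Finset.sum_const, ← Finset.sum_div]
          have : (Vf.card : ℝ) * N⁻¹ = 1 := by field_simp; exact hNdef.symm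
          rw [nsmul_eq_mul, this]
      _ ≤ 0 := by
          have : (∑ x ∈ Vf, g x) / s ≤ 1 := by
            rw [div_le_one hs]; exact hsum
          linarith
  -- rewrite each term
  have hterm : ∀ x ∈ Vf, N⁻¹ * Real.log (N⁻¹ / g x)
      = -(N⁻¹ * Real.log (N * g x / s)) - N⁻¹ * Real.log s := by
    intro x hx
    have hgx := hg x hx
    rw [Real.log_div (by positivity) hgx.ne', Real.log_div (by positivity) hs.ne',
      Real.log_mul hN.ne' hgx.ne', Real.log_inv]
    ring
  have hnat : -Real.log s ≤ ∑ x ∈ Vf, N⁻¹ * Real.log (N⁻¹ / g x) := by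
    rw [Finset.sum_congr rfl hterm, Finset.sum_sub_distrib, Finset.sum_const,
      nsmul_eq_mul]
    have h2 : (Vf.card : ℝ) * (N⁻¹ * Real.log s) = Real.log s := by
      rw [← mul_assoc]; field_simp; rw [hNdef]
    rw [h2, Finset.sum_neg_distrib]
    nlinarith [key]
  -- convert to logb
  have hconv : ∀ x : α, (N⁻¹ : ℝ) * Real.logb 2 (N⁻¹ / g x)
      = (N⁻¹ * Real.log (N⁻¹ / g x)) / Real.log 2 := by
    intro x; rw [Real.logb, mul_div_assoc]
  rw [Finset.sum_congr rfl (fun x _ => hconv x), ← Finset.sum_div, Real.logb,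
    Real.log_inv]
  exact div_le_div_of_nonneg_right hnat hlog2.le |>.trans_eq rfl


lemma ent_unifFin {α : Type*} [Fintype α] (S : Finset α) (hS : S.Nonempty) :
    ent (unifFin S) = Real.logb 2 S.card := by
  have hK : (0 : ℝ) < (S.card : ℝ) := by exact_mod_cast Finset.card_pos.mpr hS
  unfold ent unifFin
  have h1 : ∀ x, -((if x ∈ S then (S.card : ℝ)⁻¹ else 0) *
      Real.logb 2 (if x ∈ S then (S.card : ℝ)⁻¹ else 0))
      = if x ∈ S then (S.card : ℝ)⁻¹ * Real.logb 2 S.card else 0 := by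
    intro x
    split_ifs with hx
    · rw [Real.logb_inv]; ring
    · simp
  rw [Finset.sum_congr rfl (fun x _ => h1 x), Finset.sum_ite_mem, Finset.univ_inter,
    Finset.sum_const, nsmul_eq_mul, ← mul_assoc]
  field_simp

lemma counting_bound {n : ℕ} (A : Finset (F2 n)) (hA : A.Nonempty)
    (V : Submodule (ZMod 2) (F2 n)) (td : F2 n → ℝ) (htd : IsDist td) (M : ℕ)
    (hM : ∀ y : F2 n, (A.filter fun a => a + y ∈ V).card ≤ M) :
    ∑ x ∈ (V : Set (F2 n)).toFinset, addDist (unifFin A) td x ≤ (M : ℝ) / A.card := by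
  classical
  have hK : (0 : ℝ) < (A.card : ℝ) := by exact_mod_cast Finset.card_pos.mpr hA
  set K : ℝ := (A.card : ℝ) with hKdef
  set Vf : Finset (F2 n) := (V : Set (F2 n)).toFinset with hVfdef
  have h1 : ∀ x, addDist (unifFin A) td x = ∑ a ∈ A, K⁻¹ * td (x + a) := by
    intro x
    unfold addDist unifFin
    simp only [ite_mul, zero_mul, F2.sub_eq_add]
    rw [Finset.sum_ite_mem, Finset.univ_inter]
  have h2 : ∀ a : F2 n, ∑ x ∈ Vf, K⁻¹ * td (x + a)
      = ∑ y ∈ Finset.univ.filter (fun y => a + y ∈ V), K⁻¹ * td y := by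
    intro a
    refine Finset.sum_nbij' (fun x => x + a) (fun y => y + a) ?_ ?_ ?_ ?_ ?_
    · intro x hx
      rw [Finset.mem_filter]
      refine ⟨Finset.mem_univ _, ?_⟩
      have hx' : x ∈ V := by rwa [hVfdef, Set.mem_toFinset] at hx
      have : a + (x + a) = x := by
        rw [add_comm x a, ← add_assoc, F2.add_self, zero_add]
      rwa [this]
    · intro y hy
      rw [Finset.mem_filter] at hy
      show y + a ∈ Vf
      rw [hVfdef, Set.mem_toFinset]
      rw [add_comm y a]
      exact hy.2
    · intro x _; show x + a + a = x; rw [add_assoc, F2.add_self, add_zero]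
    · intro y _; show y + a + a = y; rw [add_assoc, F2.add_self, add_zero]
    · intro x _; rfl
  calc ∑ x ∈ Vf, addDist (unifFin A) td x
      = ∑ x ∈ Vf, ∑ a ∈ A, K⁻¹ * td (x + a) := Finset.sum_congr rfl (fun x _ => h1 x)
    _ = ∑ a ∈ A, ∑ x ∈ Vf, K⁻¹ * td (x + a) := Finset.sum_comm
    _ = ∑ a ∈ A, ∑ y ∈ Finset.univ.filter (fun y => a + y ∈ V), K⁻¹ * td y :=
        Finset.sum_congr rfl (fun a _ => h2 a)
    _ = ∑ a ∈ A, ∑ y : F2 n, if a + y ∈ V then K⁻¹ * td y else 0 :=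
        Finset.sum_congr rfl (fun a _ => Finset.sum_filter _ _)
    _ = ∑ y : F2 n, ∑ a ∈ A, if a + y ∈ V then K⁻¹ * td y else 0 := Finset.sum_comm
    _ = ∑ y : F2 n, ((A.filter fun a => a + y ∈ V).card : ℝ) * (K⁻¹ * td y) := by
        refine Finset.sum_congr rfl (fun y _ => ?_)
        rw [Finset.sum_ite, Finset.sum_const, Finset.sum_const_zero, add_zero,
          nsmul_eq_mul]
    _ ≤ ∑ y : F2 n, (M : ℝ) * (K⁻¹ * td y) := by
        refine Finset.sum_le_sum (fun y _ => ?_)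
        have hy : (0 : ℝ) ≤ K⁻¹ * td y := by
          have := htd.1 y; positivity
        exact mul_le_mul_of_nonneg_right (by exact_mod_cast hM y) hy
    _ = (M : ℝ) / K := by
        rw [← Finset.mul_sum, ← Finset.mul_sum, htd.2, mul_one, div_eq_mul_inv]

end Aux

/-- if `τ⁺(U_V) + τ⁻(U_V) ≤ r` for some real `r ≥ 0`, then there exists
`t` with `|A ∩ (V+t)| ≥ 2^{−r}·max(|A|, |V|)`. -/
theorem stmt_14 (n : ℕ) (A : Finset (F2 n)) (hA : A.Nonempty)
    (V : Submodule (ZMod 2) (F2 n)) (r : ℝ) (hr : 0 ≤ r)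
    (h : tauPlus A (unifSet (V : Set (F2 n))) + tauMinus A (unifSet (V : Set (F2 n)))
        ≤ (r : EReal)) :
    ∃ t : F2 n, (2 : ℝ) ^ (-r) * (max A.card (Nat.card V) : ℝ)
      ≤ (Nat.card ↥((A : Set (F2 n)) ∩ (t +ᵥ (V : Set (F2 n)))) : ℝ) := by
  classical
  set Vf : Finset (F2 n) := (V : Set (F2 n)).toFinset with hVfdef
  have h0V : (0 : F2 n) ∈ Vf := by rw [hVfdef, Set.mem_toFinset]; exact V.zero_mem
  have hVfne : Vf.Nonempty := ⟨0, h0V⟩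
  have hNV : Nat.card ↥(V : Set (F2 n)) = Vf.card := by
    rw [Nat.card_coe_set_eq, hVfdef, Set.ncard_eq_toFinset_card']
  have hNV' : Nat.card ↥V = Vf.card := hNV
  have hK0 : 0 < A.card := Finset.card_pos.mpr hA
  have hKR : (0 : ℝ) < (A.card : ℝ) := by exact_mod_cast hK0
  have hNR : (0 : ℝ) < (Vf.card : ℝ) := by exact_mod_cast Finset.card_pos.mpr hVfne
  -- the maximal coset intersection
  obtain ⟨t₀, -, ht₀⟩ := Finset.exists_max_image Finset.univ
    (fun y => (A.filter fun a => a + y ∈ V).card) ⟨0, Finset.mem_univ 0⟩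
  set M : ℕ := (A.filter fun a => a + t₀ ∈ V).card with hMdef
  have hM : ∀ y : F2 n, (A.filter fun a => a + y ∈ V).card ≤ M :=
    fun y => ht₀ y (Finset.mem_univ y)
  have hM1 : 1 ≤ M := by
    obtain ⟨a, ha⟩ := hA
    have hmem : a ∈ A.filter (fun b => b + a ∈ V) :=
      Finset.mem_filter.mpr ⟨ha, by rw [F2.add_self]; exact V.zero_mem⟩
    calc 1 ≤ (A.filter fun b => b + a ∈ V).card :=
          Finset.card_pos.mpr ⟨a, hmem⟩
      _ ≤ M := hM a
  have hMR : (1 : ℝ) ≤ (M : ℝ) := by exact_mod_cast hM1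
  have hMR0 : (0 : ℝ) < (M : ℝ) := lt_of_lt_of_le one_pos hMR
  have hMK : M ≤ A.card := Finset.card_filter_le A _
  have hMN : M ≤ Vf.card := by
    refine Finset.card_le_card_of_injOn (fun a => a + t₀) ?_ ?_
    · intro a ha
      rw [Finset.mem_coe, Finset.mem_filter] at ha
      rw [Finset.mem_coe, hVfdef, Set.mem_toFinset]
      exact ha.2
    · intro a _ b _ hab
      exact add_right_cancel hab
  -- unifSet on V equals unifFin on Vf
  have hunif : unifSet (V : Set (F2 n)) = unifFin Vf := by
    funext x
    unfold unifSet unifFin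
    rw [hNV]
    by_cases hx : x ∈ (V : Set (F2 n)) <;>
      simp [hVfdef, hx, Set.mem_toFinset]
  -- lower bound for tauMinus
  set c : ℝ := Real.logb 2 ((A.card : ℝ) / (M : ℝ)) with hcdef
  have hc : (c : EReal) ≤ tauMinus A (unifSet (V : Set (F2 n))) := by
    refine le_iInf ?_
    intro t
    rw [KL]
    split_ifs with hcond
    · rw [EReal.coe_le_coe_iff]
      have hgpos : ∀ x ∈ Vf, 0 < addDist (unifFin A) t.1 x := by
        intro x hx
        have hge : 0 ≤ addDist (unifFin A) t.1 x := by
          refine Finset.sum_nonneg (fun a _ => mul_nonneg ?_ (t.2.1 _))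
          unfold unifFin; positivity
        rcases hge.lt_or_eq with hlt | heq
        · exact hlt
        · exfalso
          have h0 := hcond x heq.symm
          rw [hunif] at h0
          unfold unifFin at h0
          rw [if_pos hx] at h0
          exact (inv_ne_zero hNR.ne') h0
      have hsum := counting_bound A hA V t.1 t.2 M hM
      have hgibbs := gibbs_bound Vf hVfne (addDist (unifFin A) t.1) hgpos
        ((M : ℝ) / (A.card : ℝ)) (by positivity) hsum
      have hinv : (((M : ℝ) / (A.card : ℝ))⁻¹ : ℝ) = (A.card : ℝ) / (M : ℝ) :=
        inv_div _ _
      rw [hinv] at hgibbs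
      refine le_trans hgibbs (le_of_eq ?_)
      have hterm : ∀ x : F2 n,
          unifFin Vf x * Real.logb 2 (unifFin Vf x / addDist (unifFin A) t.1 x)
          = if x ∈ Vf then ((Vf.card : ℝ))⁻¹ *
              Real.logb 2 (((Vf.card : ℝ))⁻¹ / addDist (unifFin A) t.1 x) else 0 := by
        intro x
        by_cases hx : x ∈ Vf
        · simp only [unifFin, if_pos hx]
        · simp [unifFin, if_neg hx]
      rw [hunif, Finset.sum_congr rfl (fun x _ => hterm x), Finset.sum_ite_mem,
        Finset.univ_inter]
    · exact le_top
  -- entropies of the uniform distributions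
  have hentA : ent (unifFin A) = Real.logb 2 (A.card : ℝ) := ent_unifFin A hA
  have hentV : ent (unifSet (V : Set (F2 n))) = Real.logb 2 (Vf.card : ℝ) := by
    rw [hunif]; exact ent_unifFin Vf hVfne
  set d : ℝ := Real.logb 2 (Vf.card : ℝ) - Real.logb 2 (A.card : ℝ) with hddef
  have hER : (((c + d) + c : ℝ) : EReal) ≤ (r : EReal) := by
    refine le_trans ?_ h
    rw [tauPlus, hentV, hentA]
    rw [EReal.coe_add, EReal.coe_add]
    exact add_le_add (add_le_add hc le_rfl) hc
  have hreal : (c + d) + c ≤ r := EReal.coe_le_coe_iff.mp hER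
  -- turn into a polynomial inequality
  have hc' : c = Real.logb 2 (A.card : ℝ) - Real.logb 2 (M : ℝ) :=
    Real.logb_div hKR.ne' hMR0.ne'
  have hKey : ((A.card : ℝ) * (Vf.card : ℝ)) / ((M : ℝ)) ^ 2 ≤ (2 : ℝ) ^ r := by
    rw [← Real.logb_le_iff_le_rpow one_lt_two (by positivity)]
    rw [Real.logb_div (by positivity) (by positivity),
      Real.logb_mul hKR.ne' hNR.ne', Real.logb_pow]
    push_cast
    rw [hc', hddef] at hreal
    linarith
  have hKey' : (A.card : ℝ) * (Vf.card : ℝ) ≤ (2 : ℝ) ^ r * ((M : ℝ)) ^ 2 := by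
    rw [div_le_iff₀ (by positivity)] at hKey
    linarith
  -- the chosen coset
  refine ⟨t₀, ?_⟩
  have hset : ((A : Set (F2 n)) ∩ (t₀ +ᵥ (V : Set (F2 n))))
      = ↑(A.filter fun a => a + t₀ ∈ V) := by
    ext a
    simp only [Set.mem_inter_iff, Finset.coe_filter, Set.mem_setOf_eq,
      Finset.mem_coe, SetLike.mem_coe]
    constructor
    · rintro ⟨haA, hav⟩
      obtain ⟨v, hv, hva⟩ := Set.mem_vadd_set.mp hav
      refine ⟨haA, ?_⟩
      have hva' : t₀ + v = a := hva
      have : a + t₀ = v := by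
        rw [← hva', add_comm t₀ v, add_assoc, F2.add_self, add_zero]
      rw [this]; exact hv
    · rintro ⟨haA, hv⟩
      refine ⟨haA, Set.mem_vadd_set.mpr ⟨a + t₀, hv, ?_⟩⟩
      show t₀ + (a + t₀) = a
      rw [add_comm a t₀, ← add_assoc, F2.add_self, zero_add]
  have hcard : (Nat.card ↥((A : Set (F2 n)) ∩ (t₀ +ᵥ (V : Set (F2 n)))) : ℝ)
      = (M : ℝ) := by
    rw [hset, Nat.card_coe_set_eq, Set.ncard_coe_finset]
  rw [hcard, hNV']
  rw [Real.rpow_neg (by norm_num : (0:ℝ) ≤ 2)]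
  have hE : (0 : ℝ) < (2 : ℝ) ^ r := Real.rpow_pos_of_pos two_pos r
  rw [inv_mul_le_iff₀ hE]
  have hMKR : (M : ℝ) ≤ (A.card : ℝ) := by exact_mod_cast hMK
  have hMNR : (M : ℝ) ≤ (Vf.card : ℝ) := by exact_mod_cast hMN
  refine max_le ?_ ?_
  · nlinarith [mul_nonneg (mul_nonneg hE.le hMR0.le) (sub_nonneg.mpr hMNR)]
  · nlinarith [mul_nonneg (mul_nonneg hE.le hMR0.le) (sub_nonneg.mpr hMKR)]

end
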